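/- arXiv:0706.2577 — 4 statements merged into one kernel-verified Lean document; each statement's English description precedes it below -/
import Mathlib

section
/- Let n ≥ 2 and let ψ : ℕ → (0,∞) be a function with ψ(k) → 0 as k → ∞. If the sum ∑_{k=1}^∞ k^{n-2} ψ(k) converges, then the set V(ψ) = {x ∈ [0,1]^n : |q·x| < ψ(|q|) for infinitely many q ∈ ℤ^n \ {0}} has n-dimensional Lebesgue measure 0. -/
open MeasureTheory

/-- Sup norm (height) of an integer vector. -/
def qnorm {n : ℕ} (q : Fin n → ℤ) : ℕ := Finset.univ.sup fun i => (q i).natAbs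

/-- The set `V(ψ)` of points of the unit cube `[0,1]^n` such that
`|q·x| < ψ(|q|)` for infinitely many nonzero integer vectors `q`. -/
def Vset (n : ℕ) (ψ : ℕ → ℝ) : Set (Fin n → ℝ) :=
  {x | (∀ i, x i ∈ Set.Icc (0 : ℝ) 1) ∧
    {q : Fin n → ℤ | q ≠ 0 ∧ |∑ i, (q i : ℝ) * x i| < ψ (qnorm q)}.Infinite}

lemma qnorm_le {n : ℕ} (q : Fin n → ℤ) (j : Fin n) : (q j).natAbs ≤ qnorm q :=
  Finset.le_sup (f := fun i => (q i).natAbs) (Finset.mem_univ j)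

lemma qnorm_pos {n : ℕ} {q : Fin n → ℤ} (hq : q ≠ 0) : 1 ≤ qnorm q := by
  obtain ⟨j, hj⟩ := Function.ne_iff.mp hq
  have : 1 ≤ (q j).natAbs := Int.natAbs_pos.mpr (by simpa using hj)
  exact this.trans (qnorm_le q j)

lemma det_updateRow_one {n : ℕ} (i : Fin n) (c : Fin n → ℝ) :
    ((1 : Matrix (Fin n) (Fin n) ℝ).updateRow i c).det = c i := by
  have h : c = ∑ k, c k • (1 : Matrix (Fin n) (Fin n) ℝ) k := by
    funext j
    simp [Matrix.one_apply, Finset.sum_ite_eq]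
  nth_rewrite 1 [h]
  rw [Matrix.det_updateRow_sum]
  simp

lemma slab_le {n : ℕ} (hn : 1 ≤ n) (q : Fin n → ℤ) (hq : q ≠ 0) (ε : ℝ) (hε : 0 < ε) :
    volume {x : Fin n → ℝ | (∀ i, x i ∈ Set.Icc (0:ℝ) 1) ∧ |∑ i, (q i : ℝ) * x i| < ε}
      ≤ ENNReal.ofReal (2 * ε / (qnorm q)) := by
  have hne : Nonempty (Fin n) := Fin.pos_iff_nonempty.mp hn
  obtain ⟨i, -, hi⟩ := Finset.exists_mem_eq_sup Finset.univ Finset.univ_nonempty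
    (fun i => (q i).natAbs)
  have hk : 1 ≤ qnorm q := qnorm_pos hq
  set k : ℕ := qnorm q with hkdef
  have hqi : (q i).natAbs = k := hi.symm
  have hqi0 : (q i : ℝ) ≠ 0 := by
    have : (q i).natAbs ≠ 0 := by omega
    exact_mod_cast fun h => this (by exact_mod_cast Int.natAbs_eq_zero.mpr (by exact_mod_cast h))
  set M : Matrix (Fin n) (Fin n) ℝ := (1 : Matrix (Fin n) (Fin n) ℝ).updateRow i
    (fun j => (q j : ℝ)) with hM
  have hdetM : M.det = (q i : ℝ) := det_updateRow_one i _
  set f : (Fin n → ℝ) →ₗ[ℝ] (Fin n → ℝ) := Matrix.toLin' M with hf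
  have hdetf : LinearMap.det f = (q i : ℝ) := by
    rw [hf, LinearMap.det_toLin']; exact hdetM
  set B : Set (Fin n → ℝ) := Set.pi Set.univ
    (fun j => if j = i then Set.Ioo (-ε) ε else Set.Icc 0 1) with hB
  have hsub : {x : Fin n → ℝ | (∀ i, x i ∈ Set.Icc (0:ℝ) 1) ∧ |∑ i, (q i : ℝ) * x i| < ε}
      ⊆ f ⁻¹' B := by
    rintro x ⟨hx1, hx2⟩ j -
    have hfx : f x j = ∑ l, M j l * x l := by
      simp [hf, Matrix.toLin'_apply, Matrix.mulVec, dotProduct]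
    by_cases hji : j = i
    · subst hji
      have : f x j = ∑ l, (q l : ℝ) * x l := by
        rw [hfx]; congr 1; funext l; rw [hM, Matrix.updateRow_self]
      simp only [this, if_pos rfl]
      exact abs_lt.mp hx2
    · have : f x j = x j := by
        rw [hfx]
        have : ∀ l, M j l = if j = l then 1 else 0 := by
          intro l; rw [hM, Matrix.updateRow_ne hji, Matrix.one_apply]
        simp [this, Finset.sum_ite_eq]
      simp only [this, if_neg hji]
      exact hx1 j
  have hBvol : volume B = ENNReal.ofReal (2 * ε) := by
    rw [hB, volume_pi_pi]
    have : ∀ j : Fin n, volume (if j = i then Set.Ioo (-ε) ε else Set.Icc (0:ℝ) 1)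
        = if j = i then ENNReal.ofReal (2 * ε) else 1 := by
      intro j
      by_cases hji : j = i <;> simp [hji, Real.volume_Ioo, Real.volume_Icc]
      ring_nf
      rw [ENNReal.ofReal_mul' (by norm_num)]; norm_num
    rw [Finset.prod_congr rfl fun j _ => this j]
    simp [Finset.prod_ite_eq]
  calc volume {x : Fin n → ℝ | (∀ i, x i ∈ Set.Icc (0:ℝ) 1) ∧ |∑ i, (q i : ℝ) * x i| < ε}
      ≤ volume (f ⁻¹' B) := measure_mono hsub
    _ = ENNReal.ofReal |(LinearMap.det f)⁻¹| * volume B :=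
        Measure.addHaar_preimage_linearMap volume (by rw [hdetf]; exact hqi0) B
    _ = ENNReal.ofReal (2 * ε / k) := by
        rw [hBvol, hdetf, ← ENNReal.ofReal_mul (by positivity)]
        congr 1
        rw [abs_inv]
        have : |(q i : ℝ)| = (k : ℝ) := by
          rw [← Int.cast_abs, Int.abs_eq_natAbs, hqi]; push_cast; ring
        rw [this]
        field_simp

noncomputable def sphereF (n k : ℕ) : Finset (Fin n → ℤ) :=
  (Fintype.piFinset fun _ => Finset.Icc (-(k:ℤ)) k).filter fun q => qnorm q = k

lemma mem_sphereF_iff {n k : ℕ} (q : Fin n → ℤ) : q ∈ sphereF n k ↔ qnorm q = k := by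
  rw [sphereF, Finset.mem_filter]
  refine ⟨fun h => h.2, fun h => ⟨Fintype.mem_piFinset.mpr fun j => ?_, h⟩⟩
  have := (qnorm_le q j).trans_eq h
  rw [Finset.mem_Icc]
  omega

lemma card_sphereF {n : ℕ} (hn : 1 ≤ n) (k : ℕ) :
    (sphereF n k).card ≤ 2 * n * (2 * k + 1) ^ (n - 1) := by
  classical
  set S : Fin n × Bool → Finset (Fin n → ℤ) := fun p =>
    Fintype.piFinset fun j => if j = p.1 then {(if p.2 then (k:ℤ) else -(k:ℤ))}
      else Finset.Icc (-(k:ℤ)) k with hS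
  have hsub : sphereF n k ⊆ (Finset.univ : Finset (Fin n × Bool)).biUnion S := by
    intro q hq
    rw [sphereF, Finset.mem_filter] at hq
    obtain ⟨hbox, hqn⟩ := hq
    have hne : (Finset.univ : Finset (Fin n)).Nonempty := by
      simpa [Finset.univ_nonempty_iff] using Fin.pos_iff_nonempty.mp hn
    obtain ⟨i, -, hi⟩ := Finset.exists_mem_eq_sup Finset.univ hne (fun i => (q i).natAbs)
    have hik : (q i).natAbs = k := by rw [← hi]; exact hqn
    have : q i = (k:ℤ) ∨ q i = -(k:ℤ) := by
      rcases Int.natAbs_eq (q i) with h | h <;> [left; right] <;> omega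
    refine Finset.mem_biUnion.mpr ⟨(i, if q i = (k:ℤ) then true else false),
      Finset.mem_univ _, ?_⟩
    rw [hS, Fintype.mem_piFinset]
    intro j
    by_cases hji : j = i
    · subst hji
      rcases this with h | h <;> simp [h] <;> split_ifs <;> omega
    · simp only [if_neg hji]
      exact Fintype.mem_piFinset.mp hbox j
  have hcard : ∀ p : Fin n × Bool, (S p).card = (2 * k + 1) ^ (n - 1) := by
    intro p
    rw [hS, Fintype.card_piFinset]
    have h1 : ∀ j : Fin n, ((if j = p.1 then ({(if p.2 then (k:ℤ) else -(k:ℤ))} : Finset ℤ)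
        else Finset.Icc (-(k:ℤ)) k)).card = if j = p.1 then 1 else 2 * k + 1 := by
      intro j
      by_cases hji : j = p.1 <;> simp [hji, Int.card_Icc]
      omega
    rw [Finset.prod_congr rfl fun j _ => h1 j,
      ← Finset.mul_prod_erase Finset.univ _ (Finset.mem_univ p.1), if_pos rfl, one_mul]
    rw [Finset.prod_congr rfl (fun j hj => if_neg (Finset.ne_of_mem_erase hj)),
      Finset.prod_const, Finset.card_erase_of_mem (Finset.mem_univ _), Finset.card_univ,
      Fintype.card_fin]
  calc (sphereF n k).card ≤ ((Finset.univ : Finset (Fin n × Bool)).biUnion S).card :=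
        Finset.card_le_card hsub
    _ ≤ ∑ p : Fin n × Bool, (S p).card := Finset.card_biUnion_le
    _ = 2 * n * (2 * k + 1) ^ (n - 1) := by
        rw [Finset.sum_congr rfl fun p _ => hcard p, Finset.sum_const, Finset.card_univ]
        simp [Fintype.card_prod, Fintype.card_fin, mul_comm, mul_assoc, mul_left_comm]

lemma fiber_bound {n : ℕ} (hn : 2 ≤ n) (ψ : ℕ → ℝ) (hψpos : ∀ k, 0 < ψ k) (k : ℕ) :
    ∑' q : (qnorm ⁻¹' {k} : Set (Fin n → ℤ)),
        (if (q : Fin n → ℤ) = 0 then 0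
          else ENNReal.ofReal (2 * ψ (qnorm (q : Fin n → ℤ)) / (qnorm (q : Fin n → ℤ))))
      ≤ ENNReal.ofReal ((4 * n * 3 ^ (n - 1)) * ((k:ℝ) ^ (n - 2) * ψ k)) := by
  classical
  rcases Nat.eq_zero_or_pos k with rfl | hk
  · have : ∀ q : (qnorm ⁻¹' {(0:ℕ)} : Set (Fin n → ℤ)),
        (if (q : Fin n → ℤ) = 0 then 0
          else ENNReal.ofReal (2 * ψ (qnorm (q : Fin n → ℤ)) / (qnorm (q : Fin n → ℤ)))) = 0 := by
      rintro ⟨q, hq⟩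
      simp only [Set.mem_preimage, Set.mem_singleton_iff] at hq
      by_cases h0 : q = 0
      · simp [h0]
      · exact absurd hq (by have := qnorm_pos h0; omega)
    rw [tsum_congr this]
    simp
  · have hset : (qnorm ⁻¹' {k} : Set (Fin n → ℤ)) = ↑(sphereF n k) := by
      ext q; simp [mem_sphereF_iff]
    rw [hset, Finset.tsum_subtype' (sphereF n k)
      (fun q => if q = 0 then 0 else ENNReal.ofReal (2 * ψ (qnorm q) / (qnorm q)))]
    have hterm : ∀ q ∈ sphereF n k,
        (if q = 0 then 0 else ENNReal.ofReal (2 * ψ (qnorm q) / (qnorm q)))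
          ≤ ENNReal.ofReal (2 * ψ k / k) := by
      intro q hq
      rw [mem_sphereF_iff] at hq
      by_cases h0 : q = 0
      · simp [h0]
      · rw [if_neg h0, hq]
    calc (∑ q ∈ sphereF n k, if q = 0 then 0
            else ENNReal.ofReal (2 * ψ (qnorm q) / (qnorm q)))
        ≤ ∑ _q ∈ sphereF n k, ENNReal.ofReal (2 * ψ k / k) := Finset.sum_le_sum hterm
      _ = (sphereF n k).card * ENNReal.ofReal (2 * ψ k / k) := by
          rw [Finset.sum_const, nsmul_eq_mul]
      _ ≤ ENNReal.ofReal ((4 * n * 3 ^ (n - 1)) * ((k:ℝ) ^ (n - 2) * ψ k)) := by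
          rw [← ENNReal.ofReal_natCast, ← ENNReal.ofReal_mul (by positivity)]
          apply ENNReal.ofReal_le_ofReal
          obtain ⟨m, rfl⟩ : ∃ m, n = m + 2 := ⟨n - 2, by omega⟩
          push_cast
          have hK1 : (1:ℝ) ≤ (k:ℝ) := by exact_mod_cast hk
          have hK0 : (k:ℝ) ≠ 0 := by positivity
          have h1 : ((sphereF (m+2) k).card : ℝ) ≤ 2 * (m+2) * (2 * k + 1) ^ (m + 1) := by
            have := card_sphereF (n := m + 2) (by omega) k
            calc ((sphereF (m+2) k).card : ℝ)
                ≤ ((2 * (m+2) * (2 * k + 1) ^ (m + 2 - 1) : ℕ) : ℝ) := by exact_mod_cast this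
              _ = 2 * (m+2) * (2 * (k:ℝ) + 1) ^ (m + 1) := by push_cast; ring_nf
          have h2 : (2 * (k:ℝ) + 1) ^ (m + 1) ≤ (3 * (k:ℝ)) ^ (m + 1) := by
            apply pow_le_pow_left₀ (by positivity)
            linarith
          have h3 : (0:ℝ) ≤ 2 * ψ k / k := div_nonneg (by linarith [hψpos k]) (by positivity)
          calc ((sphereF (m+2) k).card : ℝ) * (2 * ψ k / k)
              ≤ (2 * (m+2) * (3 * (k:ℝ)) ^ (m + 1)) * (2 * ψ k / k) := by
                apply mul_le_mul_of_nonneg_right _ h3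
                exact h1.trans (by nlinarith [h2, (by positivity : (0:ℝ) ≤ 2 * ((m:ℝ)+2))])
            _ = (4 * (m+2) * 3 ^ (m + 2 - 1)) * ((k:ℝ) ^ (m + 2 - 2) * ψ k) := by
                simp only [Nat.add_sub_cancel]
                have : m + 2 - 1 = m + 1 := by omega
                rw [this, mul_pow]
                field_simp
                ring

theorem stmt0 (n : ℕ) (hn : 2 ≤ n) (ψ : ℕ → ℝ) (hψpos : ∀ k, 0 < ψ k)
    (hψlim : Filter.Tendsto ψ Filter.atTop (nhds 0))
    (hconv : Summable fun k : ℕ => (k : ℝ) ^ (n - 2) * ψ k) :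
    volume (Vset n ψ) = 0 := by
  classical
  have hn1 : 1 ≤ n := by omega
  set A : {q : Fin n → ℤ // q ≠ 0} → Set (Fin n → ℝ) := fun i =>
    {x | (∀ j, x j ∈ Set.Icc (0:ℝ) 1) ∧ |∑ j, (i.1 j : ℝ) * x j| < ψ (qnorm i.1)} with hA
  have hsub : Vset n ψ ⊆ Filter.limsup A Filter.cofinite := by
    rintro x ⟨hx1, hx2⟩
    rw [Filter.mem_limsup_iff_frequently_mem, Filter.frequently_cofinite_iff_infinite]
    have h1 : (Subtype.val ⁻¹'
        {q : Fin n → ℤ | q ≠ 0 ∧ |∑ i, (q i : ℝ) * x i| < ψ (qnorm q)} :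
        Set {q : Fin n → ℤ // q ≠ 0}).Infinite := by
      apply hx2.preimage
      rintro q ⟨hq, -⟩
      exact ⟨⟨q, hq⟩, rfl⟩
    apply h1.mono
    rintro i ⟨-, hi⟩
    exact ⟨hx1, hi⟩
  set F : (Fin n → ℤ) → ENNReal := fun q =>
    if q = 0 then 0 else ENNReal.ofReal (2 * ψ (qnorm q) / (qnorm q)) with hF
  have hkey : ∑' i, volume (A i) ≠ ⊤ := by
    have hbound : ∀ i : {q : Fin n → ℤ // q ≠ 0}, volume (A i) ≤ F i.1 := by
      intro i
      rw [hF]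
      simp only [if_neg i.2]
      exact slab_le hn1 i.1 i.2 (ψ (qnorm i.1)) (hψpos _)
    have h2 : ∑' i, volume (A i) ≤ ∑' q : Fin n → ℤ, F q :=
      le_trans (ENNReal.tsum_le_tsum hbound)
        (ENNReal.tsum_comp_le_tsum_of_injective Subtype.val_injective F)
    have h3 : ∑' q : Fin n → ℤ, F q
        = ∑' k : ℕ, ∑' q : (qnorm ⁻¹' {k} : Set (Fin n → ℤ)), F q :=
      (ENNReal.tsum_fiberwise F qnorm).symm
    have h4 : ∀ k : ℕ, ∑' q : (qnorm ⁻¹' {k} : Set (Fin n → ℤ)), F q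
        ≤ ENNReal.ofReal ((4 * n * 3 ^ (n - 1)) * ((k:ℝ) ^ (n - 2) * ψ k)) :=
      fiber_bound hn ψ hψpos
    have h5 : ∑' k : ℕ, ENNReal.ofReal ((4 * n * 3 ^ (n - 1)) * ((k:ℝ) ^ (n - 2) * ψ k)) ≠ ⊤ := by
      rw [← ENNReal.ofReal_tsum_of_nonneg
        (fun k => mul_nonneg (by positivity) (mul_nonneg (by positivity) (hψpos k).le))
        (hconv.mul_left _)]
      exact ENNReal.ofReal_ne_top
    exact ne_top_of_le_ne_top h5 (h2.trans (h3 ▸ ENNReal.tsum_le_tsum h4))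
  have h0 := MeasureTheory.measure_limsup_cofinite_eq_zero (μ := (volume : Measure (Fin n → ℝ))) hkey
  exact le_antisymm ((measure_mono hsub).trans h0.le) zero_le
end

section
/- Let n ≥ 2 and let ψ : ℕ → (0,∞) be decreasing with ψ(k) → 0 as k → ∞, and let C > 1 be a constant with ψ(⌈k/n⌉) ≤ C ψ(k) for all k ≥ 1. If x̂ = (x₁,…,x_{n−1}) ∈ [0,1]^{n−1} satisfies ‖q̂·x̂‖ < ψ(|q̂|)/C for infinitely many q̂ ∈ ℤ^{n−1} \ {0}, where ‖·‖ denotes distance to the nearest integer, then the point (x₁,…,x_{n−1},1) ∈ [0,1]^n lies in V(ψ), i.e. |q·(x₁,…,x_{n−1},1)| < ψ(|q|) for infinitely many q ∈ ℤ^n \ {0}. -/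
open MeasureTheory

/-- Distance from a real number to the nearest integer. -/
noncomputable def distNearestInt (y : ℝ) : ℝ := |y - round y|

/-- The dimension here is `n + 1 ≥ 2`, so that `x̂` has `n = (n+1) - 1` coordinates. -/
theorem stmt4 (n : ℕ) (hn : 1 ≤ n) (ψ : ℕ → ℝ) (hψpos : ∀ k, 0 < ψ k)
    (hψdec : Antitone ψ)
    (hψlim : Filter.Tendsto ψ Filter.atTop (nhds 0))
    (C : ℝ) (hC : 1 < C)
    (hCψ : ∀ k : ℕ, 1 ≤ k → ψ ⌈(k : ℝ) / (n + 1)⌉₊ ≤ C * ψ k)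
    (xh : Fin n → ℝ) (hx : ∀ i, xh i ∈ Set.Icc (0 : ℝ) 1)
    (hinf : {qh : Fin n → ℤ | qh ≠ 0 ∧
      distNearestInt (∑ i, (qh i : ℝ) * xh i) < ψ (qnorm qh) / C}.Infinite) :
    Fin.snoc xh (1 : ℝ) ∈ Vset (n + 1) ψ := by
  have hC0 : (0:ℝ) < C := lt_trans one_pos hC
  constructor
  · intro i
    refine Fin.lastCases ?_ ?_ i
    · simp only [Fin.snoc_last]
      exact ⟨zero_le_one, le_refl 1⟩
    · intro j
      simpa only [Fin.snoc_castSucc] using hx j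
  · set f : (Fin n → ℤ) → (Fin (n+1) → ℤ) :=
      fun qh => Fin.snoc qh (-(round (∑ i, (qh i : ℝ) * xh i))) with hf
    have hfinj : Function.Injective f := by
      intro a b h
      have := congrArg Fin.init h
      simpa [f, Fin.init_snoc] using this
    refine (hinf.image hfinj.injOn).mono ?_
    rintro q ⟨qh, ⟨hqh0, hqhlt⟩, rfl⟩
    set S : ℝ := ∑ i, (qh i : ℝ) * xh i with hS
    set M : ℕ := qnorm qh with hM
    set k : ℕ := qnorm (f qh) with hk
    obtain ⟨i0, hi0⟩ := Function.ne_iff.1 hqh0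
    have hM1 : 1 ≤ M :=
      le_trans (Int.natAbs_pos.2 hi0)
        (Finset.le_sup (f := fun i => (qh i).natAbs) (Finset.mem_univ i0))
    have hMle : ∀ i, (qh i).natAbs ≤ M := fun i =>
      Finset.le_sup (f := fun i => (qh i).natAbs) (Finset.mem_univ i)
    -- |S| ≤ n * M
    have hSle : |S| ≤ (n : ℝ) * M := by
      calc |S| ≤ ∑ i, |(qh i : ℝ) * xh i| := Finset.abs_sum_le_sum_abs _ _
        _ ≤ ∑ i : Fin n, (M : ℝ) := by
            refine Finset.sum_le_sum fun i _ => ?_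
            rw [abs_mul]
            have h1 : |(qh i : ℝ)| ≤ (M : ℝ) := by
              have hz : |qh i| ≤ (M : ℤ) := by
                rw [Int.abs_eq_natAbs]; exact_mod_cast hMle i
              rw [← Int.cast_abs]; exact_mod_cast hz
            have h2 : |xh i| ≤ 1 := by
              rcases hx i with ⟨h0, h1'⟩
              rw [abs_le]; constructor <;> linarith
            calc |(qh i : ℝ)| * |xh i| ≤ |(qh i : ℝ)| * 1 :=
                  mul_le_mul_of_nonneg_left h2 (abs_nonneg _)
              _ = |(qh i : ℝ)| := mul_one _
              _ ≤ (M : ℝ) := h1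
        _ = (n : ℝ) * M := by simp [Finset.sum_const, mul_comm]
    -- |round S| ≤ n * M  (as integers)
    have hround : (round S).natAbs ≤ n * M := by
      have h1 : |(round S : ℝ)| ≤ (n : ℝ) * M + 1/2 := by
        have := abs_sub_round S
        calc |(round S : ℝ)| ≤ |S| + |(round S : ℝ) - S| := by
              have := abs_sub_abs_le_abs_sub (round S : ℝ) S
              linarith [abs_sub_comm (round S : ℝ) S, abs_sub_round S]
          _ ≤ (n : ℝ) * M + 1/2 := by
              have := abs_sub_comm (S) ((round S : ℝ))
              linarith [abs_sub_round S]
      have h2 : ((round S).natAbs : ℝ) < (n * M : ℕ) + 1 := by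
        rw [Nat.cast_natAbs] at *
        push_cast
        push_cast at h1
        linarith
      exact Nat.lt_add_one_iff.1 (by exact_mod_cast h2)
    -- bounds on k
    have hMk : M ≤ k := by
      refine Finset.sup_le fun i _ => ?_
      have : (f qh) i.castSucc = qh i := by simp [f]
      calc (qh i).natAbs = ((f qh) i.castSucc).natAbs := by rw [this]
        _ ≤ k := Finset.le_sup (f := fun j => ((f qh) j).natAbs) (Finset.mem_univ i.castSucc)
    have hkle : k ≤ n * M := by
      refine Finset.sup_le fun i _ => ?_
      refine Fin.lastCases ?_ ?_ i
      · have : (f qh) (Fin.last n) = -(round S) := by simp [f]; rfl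
        rw [this]
        simpa using hround
      · intro j
        have : (f qh) j.castSucc = qh j := by simp [f]
        rw [this]
        exact le_trans (hMle j) (Nat.le_mul_of_pos_left M (by omega))
    have hk1 : 1 ≤ k := le_trans hM1 hMk
    -- ceiling bound
    have hceil : ⌈(k : ℝ) / (n + 1)⌉₊ ≤ M := by
      rw [Nat.ceil_le, div_le_iff₀ (by positivity)]
      have : (k : ℝ) ≤ (n : ℝ) * M := by exact_mod_cast hkle
      have hM0 : (1:ℝ) ≤ (M:ℝ) := by exact_mod_cast hM1
      nlinarith
    -- ψ chain
    have hψchain : ψ M / C ≤ ψ k := by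
      rw [div_le_iff₀ hC0]
      calc ψ M ≤ ψ ⌈(k : ℝ) / (n + 1)⌉₊ := hψdec hceil
        _ ≤ C * ψ k := hCψ k hk1
        _ = ψ k * C := mul_comm _ _
    -- the dot product
    have hsum : ∑ i, ((f qh) i : ℝ) * (Fin.snoc xh (1:ℝ) : Fin (n+1) → ℝ) i = S - round S := by
      rw [Fin.sum_univ_castSucc]
      simp [f, Fin.snoc_castSucc, Fin.snoc_last, hS]
      ring
    constructor
    · intro h0
      have : (f qh) i0.castSucc = 0 := by rw [h0]; rfl
      simp [f] at this
      exact hi0 this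
    · rw [hsum]
      calc |S - round S| = distNearestInt S := rfl
        _ < ψ M / C := hqhlt
        _ ≤ ψ k := hψchain
end

section
/- Let n ≥ 2 and let ψ : ℕ → (0,∞) satisfy ψ(k) → 0 as k → ∞. If the sum ∑_{k=1}^∞ k^{n-2} ψ(k) converges, then the set V(ℝ^n; ψ) = {x ∈ ℝ^n : |q·x| < ψ(|q|) for infinitely many q ∈ ℤ^n \ {0}} has n-dimensional Lebesgue measure zero. -/
open MeasureTheory

open ENNReal

lemma slab_est (n : ℕ) (hn : 0 < n) (q : Fin n → ℤ) (hq : q ≠ 0) (c : ℝ) (hc : 0 < c)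
    (m : Fin n → ℤ) :
    volume ({x : Fin n → ℝ | |∑ i, (q i : ℝ) * x i| < c} ∩
      Set.pi Set.univ fun i => Set.Ico (m i : ℝ) (m i + 1)) ≤
      ENNReal.ofReal (2 * c / qnorm q) := by
  haveI : Nonempty (Fin n) := Fin.pos_iff_nonempty.mp hn
  obtain ⟨i₀, -, hi₀⟩ := Finset.exists_mem_eq_sup Finset.univ Finset.univ_nonempty
    (fun i => (q i).natAbs)
  have hk : 1 ≤ qnorm q := by
    obtain ⟨j, hj⟩ := Function.ne_iff.mp hq
    calc 1 ≤ (q j).natAbs := Int.natAbs_pos.mpr hj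
    _ ≤ Finset.univ.sup (fun i => (q i).natAbs) := Finset.le_sup (f := fun i => (q i).natAbs) (Finset.mem_univ j)
    _ = qnorm q := rfl
  have hqi₀ : q i₀ ≠ 0 := by
    intro h
    rw [qnorm, hi₀, h] at hk; simp at hk
  set a : ℝ := (q i₀ : ℝ) with ha_def
  have ha : a ≠ 0 := Int.cast_ne_zero.mpr hqi₀
  set M : Matrix (Fin n) (Fin n) ℝ := Matrix.updateRow 1 i₀ (fun j => (q j : ℝ)) with hM
  have hdetM : M.det = a := by
    have := Matrix.cramer_transpose_apply (1 : Matrix (Fin n) (Fin n) ℝ)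
      (fun j => (q j : ℝ)) i₀
    rw [Matrix.transpose_one, Matrix.cramer_one] at this
    simpa [hM] using this.symm
  set T := Matrix.toLin' M with hT
  have hdet : LinearMap.det T = a := by rw [hT, LinearMap.det_toLin', hdetM]
  set B : Set (Fin n → ℝ) := Set.pi Set.univ
    (fun i => if i = i₀ then Set.Ioo (-c) c else Set.Ico (m i : ℝ) (m i + 1)) with hB
  have hsub : {x : Fin n → ℝ | |∑ i, (q i : ℝ) * x i| < c} ∩
      (Set.pi Set.univ fun i => Set.Ico (m i : ℝ) (m i + 1)) ⊆ T ⁻¹' B := by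
    rintro x ⟨hx1, hx2⟩
    intro i _
    dsimp only
    have hTx : T x i = Finset.univ.sum fun j => M i j * x j := by
      rw [hT, Matrix.toLin'_apply]; rfl
    by_cases hi : i = i₀
    · rw [if_pos hi]
      have : T x i = ∑ j, (q j : ℝ) * x j := by
        rw [hTx]
        refine Finset.sum_congr rfl fun j _ => ?_
        rw [hM, hi, Matrix.updateRow_self]
      rw [this]
      exact abs_lt.mp hx1
    · simp only [if_neg hi]
      have : T x i = x i := by
        rw [hTx, hM]
        simp [Matrix.updateRow_ne hi, Matrix.one_apply]
      rw [this]
      exact hx2 i (Set.mem_univ i)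
  refine le_trans (measure_mono hsub) ?_
  rw [Measure.addHaar_preimage_linearMap volume (by rw [hdet]; exact ha) B]
  have hvolB : volume B = ENNReal.ofReal (2 * c) := by
    rw [hB, volume_pi_pi]
    rw [Finset.prod_eq_single i₀]
    · rw [if_pos rfl, Real.volume_Ioo]; congr 1; ring
    · intro j _ hj
      rw [if_neg hj, Real.volume_Ico]
      simp
    · intro h; exact absurd (Finset.mem_univ i₀) h
  rw [hvolB, hdet, ← ENNReal.ofReal_mul (abs_nonneg _)]
  apply ENNReal.ofReal_le_ofReal
  have hak : |a| = (qnorm q : ℝ) := by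
    have h1 : qnorm q = (q i₀).natAbs := hi₀
    rw [h1, Nat.cast_natAbs, ha_def]
    exact Int.cast_abs.symm
  rw [abs_inv, hak]
  rw [div_eq_mul_inv, mul_comm]
lemma fiber_card (n k : ℕ) (hk : 1 ≤ k) :
    ∃ s : Finset (Fin n → ℤ), {q : Fin n → ℤ | qnorm q = k} ⊆ ↑s ∧
      s.card ≤ 2 * n * (3 * k) ^ (n - 1) := by
  classical
  set s : Finset (Fin n → ℤ) := Finset.univ.biUnion fun i : Fin n =>
    Fintype.piFinset (Function.update (fun _ : Fin n => Finset.Icc (-(k:ℤ)) k) i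
      {(k:ℤ), -(k:ℤ)}) with hs
  refine ⟨s, ?_, ?_⟩
  · intro q hq
    simp only [Set.mem_setOf_eq] at hq
    rcases Nat.eq_zero_or_pos n with hn0 | hn0
    · exfalso
      have : qnorm q = 0 := by
        rw [qnorm]
        have : (Finset.univ : Finset (Fin n)) = ∅ := by
          rw [Finset.univ_eq_empty_iff]; rw [hn0]; exact Fin.isEmpty'
        rw [this, Finset.sup_empty]; rfl
      omega
    haveI : Nonempty (Fin n) := Fin.pos_iff_nonempty.mp hn0
    obtain ⟨i₀, -, hi₀⟩ := Finset.exists_mem_eq_sup Finset.univ Finset.univ_nonempty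
      (fun i => (q i).natAbs)
    have hqi₀ : (q i₀).natAbs = k := by rw [← hi₀]; exact hq
    rw [hs]
    simp only [Finset.coe_biUnion, Finset.coe_univ, Set.mem_iUnion]
    refine ⟨i₀, Set.mem_univ _, ?_⟩
    rw [Finset.mem_coe, Fintype.mem_piFinset]
    intro j
    by_cases hj : j = i₀
    · subst hj
      rw [Function.update_self]
      rcases Int.natAbs_eq_iff.mp hqi₀ with h | h <;> simp [h]
    · rw [Function.update_of_ne hj]
      rw [Finset.mem_Icc]
      have h1 : (q j).natAbs ≤ k := by
        rw [← hq]; exact Finset.le_sup (f := fun i => (q i).natAbs) (Finset.mem_univ j)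
      omega
  · refine le_trans (Finset.card_biUnion_le) ?_
    have hcard : ∀ i : Fin n, (Fintype.piFinset (Function.update
        (fun _ : Fin n => Finset.Icc (-(k:ℤ)) k) i {(k:ℤ), -(k:ℤ)})).card ≤
        2 * (3 * k) ^ (n - 1) := by
      intro i
      rw [Fintype.card_piFinset]
      have : ∀ j : Fin n, (Function.update (fun _ : Fin n => Finset.Icc (-(k:ℤ)) k) i
          {(k:ℤ), -(k:ℤ)} j).card = Function.update (fun _ : Fin n => 2 * k + 1) i
          ({(k:ℤ), -(k:ℤ)} : Finset ℤ).card j := by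
        intro j
        by_cases hj : j = i
        · subst hj; rw [Function.update_self, Function.update_self]
        · rw [Function.update_of_ne hj, Function.update_of_ne hj, Int.card_Icc]
          omega
      rw [Finset.prod_congr rfl (fun j _ => this j)]
      rw [Finset.prod_update_of_mem (Finset.mem_univ i)]
      have h2 : ({(k:ℤ), -(k:ℤ)} : Finset ℤ).card ≤ 2 := Finset.card_insert_le _ _
      have h3 : ∏ _x ∈ Finset.univ.erase i, (2 * k + 1) = (2 * k + 1) ^ (n - 1) := by
        rw [Finset.prod_const, Finset.card_erase_of_mem (Finset.mem_univ i),
          Finset.card_univ, Fintype.card_fin]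
      rw [Finset.sdiff_singleton_eq_erase, h3]
      calc ({(k:ℤ), -(k:ℤ)} : Finset ℤ).card * (2 * k + 1) ^ (n - 1)
          ≤ 2 * (2 * k + 1) ^ (n - 1) := Nat.mul_le_mul_right _ h2
        _ ≤ 2 * (3 * k) ^ (n - 1) := by
            apply Nat.mul_le_mul_left
            apply Nat.pow_le_pow_left
            omega
    calc ∑ i : Fin n, (Fintype.piFinset (Function.update
          (fun _ : Fin n => Finset.Icc (-(k:ℤ)) k) i {(k:ℤ), -(k:ℤ)})).card
        ≤ ∑ _i : Fin n, 2 * (3 * k) ^ (n - 1) := Finset.sum_le_sum fun i _ => hcard i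
      _ = n * (2 * (3 * k) ^ (n - 1)) := by rw [Finset.sum_const, Finset.card_univ,
          Fintype.card_fin, smul_eq_mul]
      _ = 2 * n * (3 * k) ^ (n - 1) := by ring
lemma tsum_fiber_le {α : Type*} (P : α → Prop) (s : Finset α) (hsub : {a | P a} ⊆ ↑s)
    (c : ℝ≥0∞) : ∑' _ : {a // P a}, c ≤ s.card * c := by
  have h0 : (∑' _ : {a // P a}, c) = ∑' x, ({a | P a} : Set α).indicator (fun _ => c) x :=
    tsum_subtype {a | P a} (fun _ => c)
  rw [h0]
  have h1 : ∑' x, ({a | P a} : Set α).indicator (fun _ => c) x ≤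
      ∑' x, (↑s : Set α).indicator (fun _ => c) x :=
    ENNReal.tsum_le_tsum fun x =>
      Set.indicator_le_indicator_of_subset hsub (fun _ => zero_le) x
  refine h1.trans ?_
  rw [tsum_eq_sum (s := s) (fun b hb => Set.indicator_of_notMem (by simpa using hb) _)]
  rw [Finset.sum_congr rfl (fun b hb => Set.indicator_of_mem (by simpa using hb) _)]
  rw [Finset.sum_const]
  simp [nsmul_eq_mul]

lemma qnorm_zero_sub {n : ℕ} : {q : Fin n → ℤ | qnorm q = 0} ⊆ ↑({0} : Finset (Fin n → ℤ)) := by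
  intro q hq
  simp only [Set.mem_setOf_eq] at hq
  simp only [Finset.coe_singleton, Set.mem_singleton_iff]
  funext i
  have : (q i).natAbs ≤ 0 := by
    rw [← hq]; exact Finset.le_sup (f := fun i => (q i).natAbs) (Finset.mem_univ i)
  simpa [Int.natAbs_eq_zero] using Nat.le_zero.mp this

lemma tsum_qnorm (n : ℕ) (hn : 2 ≤ n) (ψ : ℕ → ℝ) (hψpos : ∀ k, 0 < ψ k)
    (hconv : Summable fun k : ℕ => (k : ℝ) ^ (n - 2) * ψ k)
    (F : ℕ → ℝ≥0∞)
    (hF : F = fun k => if k = 0 then 1 else ENNReal.ofReal (2 * ψ k / k)) :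
    ∑' q : Fin n → ℤ, F (qnorm q) ≠ ⊤ := by
  classical
  set C : ℝ := 4 * n * 3 ^ (n - 1) with hC
  have hCpos : 0 < C := by positivity
  set b : ℕ → ℝ := fun k => if k = 0 then 1 else C * ((k : ℝ) ^ (n - 2) * ψ k) with hb
  have hbnonneg : ∀ k, 0 ≤ b k := by
    intro k
    rw [hb]
    by_cases h : k = 0 <;> simp [h]
    exact mul_nonneg hCpos.le (mul_nonneg (by positivity) (hψpos k).le)
  have hbsum : Summable b := by
    rw [← summable_nat_add_iff 1]
    have heq : (fun k : ℕ => b (k + 1)) =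
        (fun k : ℕ => C * ((k : ℝ) ^ (n - 2) * ψ k)) ∘ (fun k : ℕ => k + 1) := by
      funext k; simp [hb, Function.comp]
    rw [heq]
    exact (hconv.mul_left C).comp_injective (add_left_injective 1)
  have key : ∀ k : ℕ, (∑' _ : {q : Fin n → ℤ // qnorm q = k}, F k) ≤ ENNReal.ofReal (b k) := by
    intro k
    rcases Nat.eq_zero_or_pos k with hk | hk
    · subst hk
      refine (tsum_fiber_le _ ({0} : Finset (Fin n → ℤ)) qnorm_zero_sub _).trans ?_
      simp [hF, hb]
    · obtain ⟨s, hsub, hcard⟩ := fiber_card n k hk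
      refine (tsum_fiber_le _ s hsub _).trans ?_
      have hFk : F k = ENNReal.ofReal (2 * ψ k / k) := by
        rw [hF]; simp [Nat.pos_iff_ne_zero.mp hk]
      rw [hFk, ← ENNReal.ofReal_natCast s.card, ← ENNReal.ofReal_mul (Nat.cast_nonneg _)]
      apply ENNReal.ofReal_le_ofReal
      have hbk : b k = C * ((k : ℝ) ^ (n - 2) * ψ k) := by
        rw [hb]; simp [Nat.pos_iff_ne_zero.mp hk]
      rw [hbk]
      have h1 : (s.card : ℝ) ≤ 2 * n * (3 * k) ^ (n - 1) := by
        calc (s.card : ℝ) ≤ ((2 * n * (3 * k) ^ (n - 1) : ℕ) : ℝ) := Nat.cast_le.mpr hcard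
          _ = 2 * n * (3 * k) ^ (n - 1) := by push_cast; ring
      have hk0 : (0:ℝ) < k := by exact_mod_cast hk
      have h2 : (2 * (n:ℝ) * (3 * k) ^ (n - 1)) * (2 * ψ k / k) = C * ((k : ℝ) ^ (n - 2) * ψ k) := by
        have hn1 : n - 1 = (n - 2) + 1 := by omega
        have h3 : (3:ℝ) ^ (n - 1) = 3 * 3 ^ (n - 2) := by rw [hn1, pow_succ]; ring
        have h4 : (k:ℝ) ^ (n - 1) = (k:ℝ) ^ (n - 2) * k := by rw [hn1, pow_succ]
        rw [hC, mul_pow, h3, h4]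
        field_simp
        ring
      calc (s.card : ℝ) * (2 * ψ k / k) ≤ (2 * n * (3 * k) ^ (n - 1)) * (2 * ψ k / k) := by
            have hψ := (hψpos k).le
            apply mul_le_mul_of_nonneg_right h1 (by positivity)
        _ = C * ((k : ℝ) ^ (n - 2) * ψ k) := h2
  have main : (∑' q : Fin n → ℤ, F (qnorm q)) ≤ ENNReal.ofReal (∑' k, b k) := by
    calc ∑' q : Fin n → ℤ, F (qnorm q)
        = ∑' p : Σ k : ℕ, {q : Fin n → ℤ // qnorm q = k}, F (qnorm p.2.1) :=
          ((Equiv.sigmaFiberEquiv qnorm).tsum_eq fun q => F (qnorm q)).symm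
      _ = ∑' k : ℕ, ∑' q : {q : Fin n → ℤ // qnorm q = k}, F (qnorm q.1) :=
          ENNReal.tsum_sigma' _
      _ = ∑' k : ℕ, ∑' _q : {q : Fin n → ℤ // qnorm q = k}, F k := by
          refine tsum_congr fun k => tsum_congr fun q => by rw [q.2]
      _ ≤ ∑' k : ℕ, ENNReal.ofReal (b k) := ENNReal.tsum_le_tsum key
      _ = ENNReal.ofReal (∑' k, b k) := (ENNReal.ofReal_tsum_of_nonneg hbnonneg hbsum).symm
  exact ne_top_of_le_ne_top ENNReal.ofReal_ne_top main

lemma box_volume (n : ℕ) (m : Fin n → ℤ) :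
    volume (Set.pi Set.univ fun i => Set.Ico ((m i : ℝ)) (m i + 1)) = 1 := by
  rw [volume_pi_pi]
  have : ∀ i : Fin n, volume (Set.Ico ((m i : ℝ)) (m i + 1)) = 1 := by
    intro i
    rw [Real.volume_Ico]
    simp
  simp [this]

lemma qnorm_ne_zero {n : ℕ} {q : Fin n → ℤ} (hq : q ≠ 0) : qnorm q ≠ 0 := by
  obtain ⟨j, hj⟩ := Function.ne_iff.mp hq
  have : 1 ≤ (q j).natAbs := Int.natAbs_pos.mpr hj
  have h2 : (q j).natAbs ≤ qnorm q :=
    Finset.le_sup (f := fun i => (q i).natAbs) (Finset.mem_univ j)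
  omega

theorem stmt14 (n : ℕ) (hn : 2 ≤ n) (ψ : ℕ → ℝ) (hψpos : ∀ k, 0 < ψ k)
    (hψlim : Filter.Tendsto ψ Filter.atTop (nhds 0))
    (hconv : Summable fun k : ℕ => (k : ℝ) ^ (n - 2) * ψ k) :
    volume {x : Fin n → ℝ |
      {q : Fin n → ℤ | q ≠ 0 ∧ |∑ i, (q i : ℝ) * x i| < ψ (qnorm q)}.Infinite} = 0 := by
  classical
  have hn1 : 0 < n := by omega
  have box_null : ∀ m : Fin n → ℤ,
      volume ({x : Fin n → ℝ |
        {q : Fin n → ℤ | q ≠ 0 ∧ |∑ i, (q i : ℝ) * x i| < ψ (qnorm q)}.Infinite} ∩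
        Set.pi Set.univ fun i => Set.Ico ((m i : ℝ)) (m i + 1)) = 0 := by
    intro m
    haveI : Nonempty (Fin n) := Fin.pos_iff_nonempty.mp hn1
    obtain ⟨d⟩ := nonempty_denumerable (Fin n → ℤ)
    set e : ℕ ≃ (Fin n → ℤ) := (Denumerable.eqv (Fin n → ℤ)).symm with he
    set box : Set (Fin n → ℝ) := Set.pi Set.univ fun i => Set.Ico ((m i : ℝ)) (m i + 1)
      with hbox
    set A : (Fin n → ℤ) → Set (Fin n → ℝ) :=
      fun q => {x | |∑ i, (q i : ℝ) * x i| < ψ (qnorm q)} ∩ box with hA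
    set F : ℕ → ℝ≥0∞ := fun k => if k = 0 then 1 else ENNReal.ofReal (2 * ψ k / k) with hF
    have hsum : (∑' j : ℕ, volume (A (e j))) ≠ ⊤ := by
      rw [e.tsum_eq fun q => volume (A q)]
      refine ne_top_of_le_ne_top (tsum_qnorm n hn ψ hψpos hconv F hF)
        (ENNReal.tsum_le_tsum fun q => ?_)
      by_cases hq : q = 0
      · subst hq
        have hq0 : qnorm (0 : Fin n → ℤ) = 0 := by
          simp [qnorm]
        have h1 : volume (A 0) ≤ 1 := by
          refine le_trans (measure_mono Set.inter_subset_right) ?_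
          rw [hbox, box_volume]
        refine h1.trans ?_
        rw [hq0, hF]
        simp
      · have hk : qnorm q ≠ 0 := qnorm_ne_zero hq
        rw [hF]
        simp only [if_neg hk]
        exact slab_est n hn1 q hq (ψ (qnorm q)) (hψpos _) m
    have hBC : volume {x : Fin n → ℝ | ∃ᶠ j in Filter.atTop, x ∈ A (e j)} = 0 :=
      measure_setOf_frequently_eq_zero hsum
    refine measure_mono_null ?_ hBC
    rintro x ⟨hxV, hxbox⟩
    simp only [Set.mem_setOf_eq] at hxV ⊢
    rw [Nat.frequently_atTop_iff_infinite]
    have hpre : (e ⁻¹' {q : Fin n → ℤ | q ≠ 0 ∧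
        |∑ i, (q i : ℝ) * x i| < ψ (qnorm q)}).Infinite :=
      hxV.preimage (by rw [e.surjective.range_eq]; exact Set.subset_univ _)
    refine hpre.mono ?_
    intro j hj
    exact ⟨hj.2, hxbox⟩
  have cover : {x : Fin n → ℝ |
      {q : Fin n → ℤ | q ≠ 0 ∧ |∑ i, (q i : ℝ) * x i| < ψ (qnorm q)}.Infinite} ⊆
      ⋃ m : Fin n → ℤ, ({x : Fin n → ℝ |
        {q : Fin n → ℤ | q ≠ 0 ∧ |∑ i, (q i : ℝ) * x i| < ψ (qnorm q)}.Infinite} ∩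
        Set.pi Set.univ fun i => Set.Ico ((m i : ℝ)) (m i + 1)) := by
    intro x hx
    refine Set.mem_iUnion.mpr ⟨fun i => ⌊x i⌋, hx, ?_⟩
    intro i _
    exact ⟨Int.floor_le _, by push_cast; exact Int.lt_floor_add_one _⟩
  exact measure_mono_null cover (measure_iUnion_null fun m => box_null m)
end

section
/- Let n ≥ 2 and let ψ : ℕ → (0,∞). There is an absolute constant c(n) > 0 (depending only on n) such that for every N ≥ 1, the n-dimensional Lebesgue measure of V(ψ) = {x ∈ [0,1]^n : |q·x| < ψ(|q|) for infinitely many q ∈ ℤ^n \ {0}} is at most c(n) ∑_{k=N}^∞ k^{n-2} ψ(k). -/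
open MeasureTheory

lemma slab_measure {n : ℕ} (hn : 1 ≤ n) (q : Fin n → ℤ) (hq : q ≠ 0) (ε : ℝ) :
    volume {x : Fin n → ℝ | (∀ i, x i ∈ Set.Icc (0:ℝ) 1) ∧ |∑ i, (q i : ℝ) * x i| < ε} ≤
      ENNReal.ofReal (2 * ε / (qnorm q : ℝ)) := by
  have hne : Nonempty (Fin n) := Fin.pos_iff_nonempty.mp (by omega)
  obtain ⟨i, -, hi⟩ := Finset.exists_mem_eq_sup (Finset.univ : Finset (Fin n))
    Finset.univ_nonempty (fun i => (q i).natAbs)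
  have hk1 : 1 ≤ qnorm q := qnorm_pos hq
  have hqi : q i ≠ 0 := by
    intro h; rw [qnorm, hi, h] at hk1; simp at hk1
  set M : Matrix (Fin n) (Fin n) ℝ := (1 : Matrix (Fin n) (Fin n) ℝ).updateRow i
    (fun j => (q j : ℝ)) with hM
  have hrow : (fun j => (q j : ℝ)) = ∑ k, (fun l : Fin n => (q l : ℝ)) k •
      (1 : Matrix (Fin n) (Fin n) ℝ) k := by
    ext j
    simp [Matrix.one_apply, Finset.sum_ite_eq, mul_comm]
  have hdet : M.det = (q i : ℝ) := by
    rw [hM, hrow, Matrix.det_updateRow_sum]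
    simp
  have hdetf : LinearMap.det (Matrix.toLin' M) = (q i : ℝ) := by
    rw [LinearMap.det_toLin']; exact hdet
  have hdet0 : LinearMap.det (Matrix.toLin' M) ≠ 0 := by
    rw [hdetf]; exact_mod_cast hqi
  set S : Set (Fin n → ℝ) :=
    Set.univ.pi fun j => if j = i then Set.Ioo (-ε) ε else Set.Icc (0:ℝ) 1 with hS
  have hsub : {x : Fin n → ℝ | (∀ i, x i ∈ Set.Icc (0:ℝ) 1) ∧ |∑ i, (q i : ℝ) * x i| < ε} ⊆
      (Matrix.toLin' M) ⁻¹' S := by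
    rintro x ⟨hx1, hx2⟩
    rw [Set.mem_preimage, hS, Set.mem_univ_pi]
    intro j
    have : Matrix.toLin' M x j = if j = i then ∑ l, (q l : ℝ) * x l else x j := by
      rw [Matrix.toLin'_apply]
      show (M.mulVec x) j = _
      by_cases hji : j = i
      · subst hji
        simp [hM, Matrix.mulVec, dotProduct]
      · simp [hM, Matrix.mulVec, dotProduct, Matrix.updateRow_apply, hji,
          Matrix.one_apply]
    rw [this]
    by_cases hji : j = i
    · simp only [hji, if_pos rfl]
      exact abs_lt.mp hx2
    · simp only [hji, if_neg hji]
      exact hx1 j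
  have hSvol : volume S = ENNReal.ofReal (2 * ε) := by
    rw [hS, volume_pi_pi]
    have : ∀ j : Fin n, volume (if j = i then Set.Ioo (-ε) ε else Set.Icc (0:ℝ) 1)
        = if j = i then ENNReal.ofReal (2 * ε) else 1 := by
      intro j
      by_cases hji : j = i
      · simp [hji, Real.volume_Ioo]; ring_nf; rw [ENNReal.ofReal_mul' (by norm_num)]; simp
      · simp [hji, Real.volume_Icc]
    rw [Finset.prod_congr rfl (fun j _ => this j), Finset.prod_ite_eq' Finset.univ i
      (fun _ => ENNReal.ofReal (2 * ε))]
    simp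
  calc volume {x : Fin n → ℝ | (∀ i, x i ∈ Set.Icc (0:ℝ) 1) ∧ |∑ i, (q i : ℝ) * x i| < ε}
      ≤ volume ((Matrix.toLin' M) ⁻¹' S) := measure_mono hsub
    _ = ENNReal.ofReal |(LinearMap.det (Matrix.toLin' M))⁻¹| * volume S :=
        Measure.addHaar_preimage_linearMap volume hdet0 S
    _ ≤ ENNReal.ofReal (2 * ε / (qnorm q : ℝ)) := by
        rw [hSvol, ← ENNReal.ofReal_mul (abs_nonneg _)]
        apply ENNReal.ofReal_le_ofReal
        rw [hdetf, abs_inv]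
        have habs : |(q i : ℝ)| = (qnorm q : ℝ) := by
          rw [qnorm, hi, Nat.cast_natAbs, Int.cast_abs]
        rw [habs]
        rw [div_eq_mul_inv]; ring_nf; exact le_refl _


lemma card_bound (n N k : ℕ) (hn : 1 ≤ n) :
    (((Fintype.piFinset fun _ : Fin n => Finset.Icc (-(k:ℤ)) k)).filter
      (fun q => qnorm q = k ∧ q ≠ 0 ∧ N ≤ k)).card ≤ 2 * n * (2*k+1)^(n-1) := by
  have hne : Nonempty (Fin n) := Fin.pos_iff_nonempty.mp (by omega)
  set T : Fin n → Finset (Fin n → ℤ) := fun i => Fintype.piFinset fun j =>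
    if j = i then ({-(k:ℤ), (k:ℤ)} : Finset ℤ) else Finset.Icc (-(k:ℤ)) k with hT
  have hsub : (((Fintype.piFinset fun _ : Fin n => Finset.Icc (-(k:ℤ)) k)).filter
      (fun q => qnorm q = k ∧ q ≠ 0 ∧ N ≤ k)) ⊆ Finset.univ.biUnion T := by
    intro q hq
    rw [Finset.mem_filter] at hq
    obtain ⟨-, hqn, -, -⟩ := hq
    obtain ⟨i, -, hi⟩ := Finset.exists_mem_eq_sup (Finset.univ : Finset (Fin n))
      Finset.univ_nonempty (fun i => (q i).natAbs)
    refine Finset.mem_biUnion.mpr ⟨i, Finset.mem_univ i, ?_⟩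
    rw [hT]
    rw [Fintype.mem_piFinset]
    intro j
    by_cases hji : j = i
    · subst hji
      have : (q j).natAbs = k := by rw [← hi]; exact hqn
      rw [if_pos rfl]
      simp only [Finset.mem_insert, Finset.mem_singleton]
      omega
    · have : (q j).natAbs ≤ k := by
        rw [← hqn]
        exact Finset.le_sup (f := fun i => (q i).natAbs) (Finset.mem_univ j)
      rw [if_neg hji]
      simp only [Finset.mem_Icc]
      omega
  have hTcard : ∀ i, (T i).card ≤ 2 * (2*k+1)^(n-1) := by
    intro i
    rw [hT, Fintype.card_piFinset]
    have h1 : ∀ j : Fin n, (if j = i then ({-(k:ℤ), (k:ℤ)} : Finset ℤ)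
        else Finset.Icc (-(k:ℤ)) k).card = if j = i then ({-(k:ℤ), (k:ℤ)} : Finset ℤ).card
        else (2*k+1) := by
      intro j
      by_cases hji : j = i
      · simp [hji]
      · simp only [if_neg hji, Int.card_Icc]
        omega
    rw [Finset.prod_congr rfl fun j _ => h1 j]
    rw [← Finset.mul_prod_erase Finset.univ _ (Finset.mem_univ i)]
    simp only [if_pos rfl]
    have h2 : ∀ j ∈ Finset.univ.erase i, (if j = i then ({-(k:ℤ), (k:ℤ)} : Finset ℤ).card
        else (2*k+1)) = 2*k+1 := by
      intro j hj
      rw [if_neg (Finset.mem_erase.mp hj).1]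
    rw [Finset.prod_congr rfl h2, Finset.prod_const, Finset.card_erase_of_mem (Finset.mem_univ i)]
    have h3 : ({-(k:ℤ), (k:ℤ)} : Finset ℤ).card ≤ 2 := by
      apply le_trans (Finset.card_insert_le _ _); simp
    have h4 : (Finset.univ : Finset (Fin n)).card - 1 = n - 1 := by simp
    rw [h4]
    exact Nat.mul_le_mul_right _ h3
  calc (((Fintype.piFinset fun _ : Fin n => Finset.Icc (-(k:ℤ)) k)).filter
      (fun q => qnorm q = k ∧ q ≠ 0 ∧ N ≤ k)).card
      ≤ (Finset.univ.biUnion T).card := Finset.card_le_card hsub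
    _ ≤ ∑ i, (T i).card := Finset.card_biUnion_le
    _ ≤ ∑ _i : Fin n, 2 * (2*k+1)^(n-1) := Finset.sum_le_sum fun i _ => hTcard i
    _ = 2 * n * (2*k+1)^(n-1) := by simp [Finset.sum_const]; ring

theorem stmt15 (n : ℕ) (hn : 2 ≤ n) :
    ∃ c : ℝ, 0 < c ∧
      ∀ ψ : ℕ → ℝ, (∀ k, 0 < ψ k) →
        ∀ N : ℕ, 1 ≤ N →
          volume (Vset n ψ) ≤
            ENNReal.ofReal c *
              ∑' k : ℕ, if N ≤ k then ENNReal.ofReal ((k : ℝ) ^ (n - 2) * ψ k) else 0 := by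
  have hnR : (0:ℝ) < (n:ℝ) := by exact_mod_cast (by omega : 0 < n)
  refine ⟨4 * n * 3^(n-1), by positivity, ?_⟩
  have hc0 : (0:ℝ) ≤ 4 * n * 3^(n-1) := by positivity
  intro ψ hψ N hN
  set A : (Fin n → ℤ) → Set (Fin n → ℝ) := fun q =>
    {x : Fin n → ℝ | (∀ i, x i ∈ Set.Icc (0:ℝ) 1) ∧ |∑ i, (q i : ℝ) * x i| < ψ (qnorm q)}
    with hA
  set F : ℕ → Finset (Fin n → ℤ) := fun k =>
    ((Fintype.piFinset fun _ : Fin n => Finset.Icc (-(k:ℤ)) k)).filter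
      (fun q => qnorm q = k ∧ q ≠ 0 ∧ N ≤ k) with hF
  set B : ℕ → Set (Fin n → ℝ) := fun k => ⋃ q ∈ F k, A q with hB
  have hcover : Vset n ψ ⊆ ⋃ k, B k := by
    rintro x ⟨hx1, hx2⟩
    have hfin : {q : Fin n → ℤ | qnorm q < N}.Finite := by
      apply Set.Finite.subset
        (Fintype.piFinset fun _ : Fin n => Finset.Icc (-(N:ℤ)) N).finite_toSet
      intro q hq
      simp only [Set.mem_setOf_eq] at hq
      simp only [Finset.mem_coe, Fintype.mem_piFinset, Finset.mem_Icc]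
      intro j
      have : (q j).natAbs ≤ qnorm q :=
        Finset.le_sup (f := fun i => (q i).natAbs) (Finset.mem_univ j)
      omega
    obtain ⟨q, hqmem, hqN⟩ := (hx2.diff hfin).nonempty
    obtain ⟨hq0, hqlt⟩ := hqmem
    simp only [Set.mem_setOf_eq, not_lt] at hqN
    refine Set.mem_iUnion.mpr ⟨qnorm q, Set.mem_iUnion₂.mpr ⟨q, ?_, hx1, hqlt⟩⟩
    rw [hF, Finset.mem_filter]
    refine ⟨?_, rfl, hq0, hqN⟩
    rw [Fintype.mem_piFinset]
    intro j
    have : (q j).natAbs ≤ qnorm q :=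
      Finset.le_sup (f := fun i => (q i).natAbs) (Finset.mem_univ j)
    simp only [Finset.mem_Icc]
    omega
  have hterm : ∀ k : ℕ, volume (B k) ≤
      if N ≤ k then ENNReal.ofReal ((4 * n * 3^(n-1) : ℝ) * ((k:ℝ)^(n-2) * ψ k)) else 0 := by
    intro k
    by_cases hkN : N ≤ k
    · rw [if_pos hkN]
      have hk1 : 1 ≤ k := le_trans hN hkN
      have hKpos : (0:ℝ) < (k:ℝ) := by exact_mod_cast hk1
      have hAvol : ∀ q ∈ F k, volume (A q) ≤ ENNReal.ofReal (2 * ψ k / (k:ℝ)) := by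
        intro q hq
        rw [hF, Finset.mem_filter] at hq
        obtain ⟨-, hqn, hq0, -⟩ := hq
        subst hqn
        exact slab_measure (by omega) q hq0 (ψ (qnorm q))
      have hreal : ((2*n*(2*k+1)^(n-1) : ℕ) : ℝ) * (2 * ψ k / (k:ℝ)) ≤
          (4 * n * 3^(n-1) : ℝ) * ((k:ℝ)^(n-2) * ψ k) := by
        have hK1 : (1:ℝ) ≤ (k:ℝ) := by exact_mod_cast hk1
        have hpow : (k:ℝ)^(n-1) = (k:ℝ)^(n-2) * (k:ℝ) := by
          rw [← pow_succ]; congr 1; omega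
        have h2 : ((2*(k:ℝ)+1))^(n-1) ≤ (3*(k:ℝ))^(n-1) :=
          pow_le_pow_left₀ (by positivity) (by linarith) _
        rw [mul_pow] at h2
        have hψ0 : (0:ℝ) ≤ ψ k := le_of_lt (hψ k)
        have e1 : ((2*n*(2*k+1)^(n-1) : ℕ) : ℝ) * (2 * ψ k / (k:ℝ)) =
            (4*(n:ℝ)*(2*(k:ℝ)+1)^(n-1)*ψ k)/(k:ℝ) := by
          push_cast; ring
        have e2 : (4 * (n:ℝ) * 3^(n-1) : ℝ) * ((k:ℝ)^(n-2) * ψ k) =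
            (4*(n:ℝ)*(3^(n-1)*(k:ℝ)^(n-1))*ψ k)/(k:ℝ) := by
          rw [hpow, eq_div_iff hKpos.ne']; ring
        rw [e1, e2]
        gcongr
      calc volume (B k) ≤ ∑ q ∈ F k, volume (A q) := measure_biUnion_finset_le (F k) A
        _ ≤ (F k).card • ENNReal.ofReal (2 * ψ k / (k:ℝ)) :=
            Finset.sum_le_card_nsmul _ _ _ hAvol
        _ = ((F k).card : ENNReal) * ENNReal.ofReal (2 * ψ k / (k:ℝ)) := nsmul_eq_mul _ _
        _ ≤ ((2*n*(2*k+1)^(n-1) : ℕ) : ENNReal) * ENNReal.ofReal (2 * ψ k / (k:ℝ)) := by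
            gcongr
            exact_mod_cast card_bound n N k (by omega)
        _ = ENNReal.ofReal (((2*n*(2*k+1)^(n-1) : ℕ) : ℝ) * (2 * ψ k / (k:ℝ))) := by
            rw [ENNReal.ofReal_mul (by positivity), ENNReal.ofReal_natCast]
        _ ≤ ENNReal.ofReal ((4 * n * 3^(n-1) : ℝ) * ((k:ℝ)^(n-2) * ψ k)) :=
            ENNReal.ofReal_le_ofReal hreal
    · rw [if_neg hkN]
      have hFe : F k = ∅ := by
        rw [hF]
        ext q
        simp only [Finset.mem_filter, Finset.notMem_empty, iff_false, not_and]
        intro _ _ _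
        exact hkN
      simp [hB, hFe]
  calc volume (Vset n ψ) ≤ volume (⋃ k, B k) := measure_mono hcover
    _ ≤ ∑' k, volume (B k) := measure_iUnion_le _
    _ ≤ ∑' k : ℕ, (if N ≤ k then
          ENNReal.ofReal ((4 * n * 3^(n-1) : ℝ) * ((k:ℝ)^(n-2) * ψ k)) else 0) :=
        ENNReal.tsum_le_tsum hterm
    _ = ENNReal.ofReal (4 * n * 3^(n-1)) *
          ∑' k : ℕ, (if N ≤ k then ENNReal.ofReal ((k : ℝ) ^ (n - 2) * ψ k) else 0) := by
        rw [← ENNReal.tsum_mul_left]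
        apply tsum_congr
        intro k
        by_cases h : N ≤ k
        · rw [if_pos h, if_pos h, ENNReal.ofReal_mul hc0]
        · rw [if_neg h, if_neg h, mul_zero]
end
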